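/- For every Schwartz function f : ℝ³ → ℝ, − ∫_{ℝ³} f(v) · (ℒf)(v) dv = ∫_{ℝ³} | ∇_v((I − P₀)f)(v) + (v/2) · ((I − P₀)f)(v) |² dv, where (I − P₀)f = f − a^f √M. -/

import Mathlib

open MeasureTheory Real

noncomputable section

abbrev E3 := EuclideanSpace ℝ (Fin 3)

/-- The normalized global Maxwellian `M(v) = (2π)^{-3/2} exp(-|v|²/2)`. -/
def Mw (v : E3) : ℝ := (2 * π) ^ (-(3:ℝ)/2) * Real.exp (-‖v‖ ^ 2 / 2)

/-- `√M`. -/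
def sqrtM (v : E3) : ℝ := Real.sqrt (Mw v)

/-- Partial derivative in the `i`-th coordinate direction. -/
def pd (i : Fin 3) (f : E3 → ℝ) : E3 → ℝ :=
  fun v => fderiv ℝ f v (EuclideanSpace.single i 1)

/-- The linearized Fokker–Planck operator
`ℒf = M^{-1/2} div_v ( M ∇_v (f M^{-1/2}) )`. -/
def Lop (f : E3 → ℝ) : E3 → ℝ := fun v =>
  (sqrtM v)⁻¹ * ∑ i, pd i (fun w => Mw w * pd i (fun u => f u / sqrtM u) w) v

/-- `a^f = ∫ √M f`. -/
def aF (f : E3 → ℝ) : ℝ := ∫ v, sqrtM v * f v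

/-- `b^f = ∫ v √M f` (componentwise). -/
def bF (f : E3 → ℝ) (i : Fin 3) : ℝ := ∫ v, v i * sqrtM v * f v

/-- `ω^f = ∫ ((|v|²-3)/√6) √M f`. -/
def wF (f : E3 → ℝ) : ℝ := ∫ v, ((‖v‖ ^ 2 - 3) / Real.sqrt 6) * sqrtM v * f v

/-- The macroscopic projection `Pf = (a^f + b^f · v + ω^f (|v|²-3)/√6) √M`. -/
def Pmac (f : E3 → ℝ) : E3 → ℝ := fun v =>
  (aF f + (∑ i, bF f i * v i) + wF f * ((‖v‖ ^ 2 - 3) / Real.sqrt 6)) * sqrtM v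

/-- The squared weighted norm `|g|_ν² = ∫ (|∇_v g|² + (1+|v|²) g²)`. -/
def nuSq (g : E3 → ℝ) : ℝ :=
  ∫ v, ((∑ i, (pd i g v) ^ 2) + (1 + ‖v‖ ^ 2) * (g v) ^ 2)

/-! ### Auxiliary lemmas -/

lemma Mw_pos (v : E3) : 0 < Mw v :=
  mul_pos (rpow_pos_of_pos (by positivity) _) (exp_pos _)

lemma sqrtM_pos (v : E3) : 0 < sqrtM v := Real.sqrt_pos.2 (Mw_pos v)

lemma sq_sqrtM (v : E3) : sqrtM v * sqrtM v = Mw v := Real.mul_self_sqrt (Mw_pos v).le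

lemma sqrtM_eq (v : E3) : sqrtM v = Real.sqrt ((2*π) ^ (-(3:ℝ)/2)) * Real.exp (-‖v‖^2/4) := by
  rw [sqrtM, Mw, Real.sqrt_mul (by positivity)]
  congr 1
  rw [show -‖v‖^2/4 = (-‖v‖^2/2)/2 by ring]
  exact (Real.exp_half _).symm

lemma hasFDerivAt_normSq (v : E3) :
    HasFDerivAt (fun w : E3 => ‖w‖^2) ((2:ℝ) • (innerSL ℝ v)) v := by
  have h := (hasFDerivAt_id v).inner ℝ (hasFDerivAt_id v)
  simp only [real_inner_self_eq_norm_sq] at h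
  refine h.congr_fderiv ?_
  ext w
  simp only [ContinuousLinearMap.smul_apply, innerSL_apply_apply, ContinuousLinearMap.comp_apply,
    ContinuousLinearMap.prod_apply, fderivInnerCLM_apply, id, ContinuousLinearMap.id_apply,
    smul_eq_mul]
  rw [real_inner_comm]
  ring

lemma hasFDerivAt_sqrtM (v : E3) :
    HasFDerivAt sqrtM ((-(sqrtM v)/2) • (innerSL ℝ v)) v := by
  have h1 : HasFDerivAt (fun w : E3 => -‖w‖^2/4) ((-(1:ℝ)/2) • (innerSL ℝ v)) v := by
    have := (hasFDerivAt_normSq v).const_mul (-(1:ℝ)/4)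
    have e : (fun w : E3 => -‖w‖^2/4) = fun y => -(1:ℝ)/4 * ‖y‖^2 := by ext w; ring
    rw [e]
    refine this.congr_fderiv ?_
    ext w
    simp only [ContinuousLinearMap.smul_apply, innerSL_apply_apply, smul_eq_mul]
    ring
  have h2 := (Real.hasDerivAt_exp (-‖v‖^2/4)).comp_hasFDerivAt v h1
  have h3 := h2.const_mul (Real.sqrt ((2*π) ^ (-(3:ℝ)/2)))
  have hsm : sqrtM = fun w : E3 => Real.sqrt ((2*π) ^ (-(3:ℝ)/2)) * Real.exp (-‖w‖^2/4) :=
    funext sqrtM_eq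
  rw [hsm]
  refine h3.congr_fderiv ?_
  ext w
  simp only [ContinuousLinearMap.smul_apply, innerSL_apply_apply, smul_eq_mul]
  ring

lemma inner_single (v : E3) (i : Fin 3) :
    (inner ℝ v (EuclideanSpace.single i (1:ℝ)) : ℝ) = v i := by
  simp [EuclideanSpace.inner_single_right]

lemma pd_sqrtM (i : Fin 3) (v : E3) : pd i sqrtM v = -(v i / 2) * sqrtM v := by
  rw [pd, (hasFDerivAt_sqrtM v).fderiv]
  simp only [ContinuousLinearMap.smul_apply, innerSL_apply_apply, smul_eq_mul, inner_single]
  ring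

lemma hasFDerivAt_invSqrtM (v : E3) :
    HasFDerivAt (fun w => (sqrtM w)⁻¹) (((sqrtM v)⁻¹/2) • (innerSL ℝ v)) v := by
  have h := (hasDerivAt_inv (sqrtM_pos v).ne').comp_hasFDerivAt v (hasFDerivAt_sqrtM v)
  refine h.congr_fderiv ?_
  ext w
  simp only [ContinuousLinearMap.smul_apply, innerSL_apply_apply, smul_eq_mul]
  have := (sqrtM_pos v).ne'
  field_simp

def eb (i : Fin 3) : E3 := EuclideanSpace.single i 1

lemma schwartz_htg (g : SchwartzMap E3 ℝ) : Function.HasTemperateGrowth ⇑g := by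
  refine ⟨g.smooth ⊤, fun n => ⟨0, SchwartzMap.seminorm ℝ 0 n g, fun x => ?_⟩⟩
  simpa using g.norm_iteratedFDeriv_le_seminorm ℝ n x

lemma proj_htg (i : Fin 3) : Function.HasTemperateGrowth (fun v : E3 => v i) :=
  (EuclideanSpace.proj i (𝕜 := ℝ)).hasTemperateGrowth

/-- `D_i f = ∂_i f + (v_i/2) f` as a Schwartz function. -/
def Dop (f : SchwartzMap E3 ℝ) (i : Fin 3) : SchwartzMap E3 ℝ :=
  LineDeriv.lineDerivOpCLM ℝ (SchwartzMap E3 ℝ) (eb i) f +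
    (2⁻¹:ℝ) • (SchwartzMap.bilinLeftCLM (ContinuousLinearMap.mul ℝ ℝ) (proj_htg i) f)

lemma Dop_apply (f : SchwartzMap E3 ℝ) (i : Fin 3) (v : E3) :
    Dop f i v = pd i ⇑f v + (v i / 2) * f v := by
  have : Dop f i v = pd i ⇑f v + (2⁻¹:ℝ) • (f v * v i) := rfl
  rw [this]; simp only [smul_eq_mul]; ring

/-- `f · D_i f` as a Schwartz function. -/
def Gop (f : SchwartzMap E3 ℝ) (i : Fin 3) : SchwartzMap E3 ℝ :=
  SchwartzMap.bilinLeftCLM (ContinuousLinearMap.mul ℝ ℝ) (schwartz_htg (Dop f i)) f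

lemma Gop_coe (f : SchwartzMap E3 ℝ) (i : Fin 3) :
    ⇑(Gop f i) = fun v => f v * Dop f i v := rfl

/-- `(D_i f)²` as a Schwartz function. -/
def Qop (f : SchwartzMap E3 ℝ) (i : Fin 3) : SchwartzMap E3 ℝ :=
  SchwartzMap.bilinLeftCLM (ContinuousLinearMap.mul ℝ ℝ) (schwartz_htg (Dop f i)) (Dop f i)

lemma Qop_coe (f : SchwartzMap E3 ℝ) (i : Fin 3) :
    ⇑(Qop f i) = fun v => Dop f i v * Dop f i v := rfl

lemma integral_pd_eq_zero (g : SchwartzMap E3 ℝ) (i : Fin 3) :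
    ∫ v, pd i ⇑g v = 0 := by
  have h := integral_mul_fderiv_eq_neg_fderiv_mul_of_integrable
    (μ := (volume : Measure E3)) (f := fun _ : E3 => (1:ℝ)) (g := ⇑g) (v := eb i)
    ?_ ?_ ?_ (fun x _ => differentiableAt_const _) (fun x _ => g.differentiableAt)
  · simp only [one_mul, fderiv_fun_const, Pi.zero_apply, ContinuousLinearMap.zero_apply,
      zero_mul, integral_zero, neg_zero] at h
    simpa [pd, eb] using h
  · have : (fun x : E3 => fderiv ℝ (fun _ : E3 => (1:ℝ)) x (eb i) * g x) = fun _ => 0 := by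
      ext x; simp
    rw [this]; exact integrable_zero _ _ _
  · simpa [one_mul] using (show Integrable (fun x => fderiv ℝ (⇑g) x (eb i)) volume from (LineDeriv.lineDerivOpCLM ℝ (SchwartzMap E3 ℝ) (eb i) g).integrable (μ := volume))
  · simpa [one_mul] using (g.integrable (μ := volume))

lemma pd_f_div_sqrtM (f : SchwartzMap E3 ℝ) (i : Fin 3) (v : E3) :
    pd i (fun u => f u / sqrtM u) v = Dop f i v / sqrtM v := by
  have hdiv : (fun u : E3 => f u / sqrtM u) = fun u => f u * (sqrtM u)⁻¹ := by
    ext u; rw [div_eq_mul_inv]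
  rw [pd, hdiv, fderiv_fun_mul (f.differentiable.differentiableAt)
    (hasFDerivAt_invSqrtM v).differentiableAt, (hasFDerivAt_invSqrtM v).fderiv]
  simp only [ContinuousLinearMap.add_apply, ContinuousLinearMap.smul_apply, innerSL_apply_apply,
    smul_eq_mul, inner_single]
  rw [Dop_apply, pd]
  have := (sqrtM_pos v).ne'
  field_simp
  ring

lemma inner_fun_eq (f : SchwartzMap E3 ℝ) (i : Fin 3) :
    (fun w => Mw w * pd i (fun u => f u / sqrtM u) w) = fun w => sqrtM w * Dop f i w := by
  ext w
  rw [pd_f_div_sqrtM, ← sq_sqrtM]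
  have := (sqrtM_pos w).ne'
  field_simp

lemma pd_sqrtM_mul (g : SchwartzMap E3 ℝ) (i : Fin 3) (v : E3) :
    pd i (fun w => sqrtM w * g w) v
      = sqrtM v * (pd i ⇑g v - (v i / 2) * g v) := by
  rw [pd, fderiv_fun_mul (hasFDerivAt_sqrtM v).differentiableAt (g.differentiable.differentiableAt)]
  simp only [ContinuousLinearMap.add_apply, ContinuousLinearMap.smul_apply, smul_eq_mul]
  have h1 : fderiv ℝ sqrtM v (EuclideanSpace.single i 1) = -(v i / 2) * sqrtM v := pd_sqrtM i v
  rw [h1, pd]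
  ring

lemma Lop_eq (f : SchwartzMap E3 ℝ) (v : E3) :
    Lop ⇑f v = ∑ i, (pd i ⇑(Dop f i) v - (v i / 2) * Dop f i v) := by
  rw [Lop]
  have hsum : ∀ i : Fin 3, pd i (fun w => Mw w * pd i (fun u => f u / sqrtM u) w) v
      = sqrtM v * (pd i ⇑(Dop f i) v - (v i / 2) * Dop f i v) := fun i => by
    rw [inner_fun_eq f i, pd_sqrtM_mul]
  rw [Finset.sum_congr rfl (fun i _ => hsum i), ← Finset.mul_sum, ← mul_assoc,
    inv_mul_cancel₀ (sqrtM_pos v).ne', one_mul]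

lemma pd_Gop (f : SchwartzMap E3 ℝ) (i : Fin 3) (v : E3) :
    pd i ⇑(Gop f i) v = f v * pd i ⇑(Dop f i) v + Dop f i v * pd i ⇑f v := by
  rw [pd, Gop_coe, fderiv_fun_mul (f.differentiable.differentiableAt)
    ((Dop f i).differentiable.differentiableAt)]
  simp only [ContinuousLinearMap.add_apply, ContinuousLinearMap.smul_apply, smul_eq_mul]
  rw [pd, pd]

lemma fLf (f : SchwartzMap E3 ℝ) (v : E3) :
    f v * Lop ⇑f v = ∑ i, (pd i ⇑(Gop f i) v - Dop f i v * Dop f i v) := by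
  rw [Lop_eq, Finset.mul_sum]
  refine Finset.sum_congr rfl fun i _ => ?_
  rw [pd_Gop, Dop_apply f i v]
  ring

lemma rhs_ptwise (f : SchwartzMap E3 ℝ) (a : ℝ) (i : Fin 3) (v : E3) :
    pd i (fun w => f w - a * sqrtM w) v + (v i / 2) * (f v - a * sqrtM v) = Dop f i v := by
  rw [pd, fderiv_fun_sub (f.differentiable.differentiableAt)
    (((hasFDerivAt_sqrtM v).differentiableAt).const_mul a),
    fderiv_const_mul (hasFDerivAt_sqrtM v).differentiableAt a]
  simp only [ContinuousLinearMap.sub_apply, ContinuousLinearMap.smul_apply, smul_eq_mul]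
  have h1 : fderiv ℝ sqrtM v (EuclideanSpace.single i 1) = -(v i / 2) * sqrtM v := pd_sqrtM i v
  rw [h1, Dop_apply, pd]
  ring

/-- For every Schwartz `f`, `-∫ f·ℒf = ∫ |∇_v((I-P₀)f) + (v/2)·(I-P₀)f|² dv`,
where `(I-P₀)f = f - a^f √M`. -/
theorem stmt5 (f : SchwartzMap E3 ℝ) :
    -∫ v, f v * Lop ⇑f v
      = ∫ v, ∑ i,
          (pd i (fun w => f w - aF ⇑f * sqrtM w) v
            + (v i / 2) * (f v - aF ⇑f * sqrtM v)) ^ 2 := by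
  have hLHS : (fun v => f v * Lop ⇑f v)
      = fun v => ∑ i, ((LineDeriv.lineDerivOpCLM ℝ (SchwartzMap E3 ℝ) (eb i) (Gop f i)) v - (Qop f i) v) := by
    funext v
    rw [fLf]
    refine Finset.sum_congr rfl fun i _ => ?_
    rw [LineDeriv.lineDerivOpCLM_apply, SchwartzMap.lineDerivOp_apply_eq_fderiv, Qop_coe]
    rfl
  have hRHS : (fun v => ∑ i : Fin 3,
      (pd i (fun w => f w - aF ⇑f * sqrtM w) v
        + (v i / 2) * (f v - aF ⇑f * sqrtM v)) ^ 2) = fun v => ∑ i, (Qop f i) v := by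
    funext v
    refine Finset.sum_congr rfl fun i _ => ?_
    rw [rhs_ptwise f (aF ⇑f) i v, Qop_coe, sq]
  rw [hLHS, hRHS]
  rw [integral_finset_sum (μ := volume) Finset.univ
    (f := fun (i : Fin 3) (v : E3) => ((LineDeriv.lineDerivOpCLM ℝ (SchwartzMap E3 ℝ) (eb i) (Gop f i)) v - (Qop f i) v))
    (fun i _ => ((LineDeriv.lineDerivOpCLM ℝ (SchwartzMap E3 ℝ) (eb i) (Gop f i)).integrable).sub ((Qop f i).integrable)),
    integral_finset_sum (μ := volume) Finset.univ
    (f := fun (i : Fin 3) (v : E3) => (Qop f i) v)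
    (fun i _ => (Qop f i).integrable)]
  rw [neg_eq_iff_eq_neg, ← Finset.sum_neg_distrib]
  refine Finset.sum_congr rfl fun i _ => ?_
  rw [integral_sub ((LineDeriv.lineDerivOpCLM ℝ (SchwartzMap E3 ℝ) (eb i) (Gop f i)).integrable) ((Qop f i).integrable)]
  have h0 : ∫ v, (LineDeriv.lineDerivOpCLM ℝ (SchwartzMap E3 ℝ) (eb i) (Gop f i)) v = 0 := by
    rw [show (fun v => (LineDeriv.lineDerivOpCLM ℝ (SchwartzMap E3 ℝ) (eb i) (Gop f i)) v) = fun v => pd i ⇑(Gop f i) v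
      from funext fun v => by rw [LineDeriv.lineDerivOpCLM_apply, SchwartzMap.lineDerivOp_apply_eq_fderiv]; rfl]
    exact integral_pd_eq_zero (Gop f i) i
  rw [h0, zero_sub]
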